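/- Let V be a 6-dimensional real vector space, let η₁, η₂, ω be alternating 2-forms on V, and let q ∈ ℝ. If η₁ ∧ η₁ = 0, η₂ ∧ η₂ = 0, and ω ∧ ω + q·(η₁ ∧ η₂) = 0, then ω ∧ ω ∧ ω = 0. -/

import Mathlib

/-- The wedge product of a real-valued alternating `k`-form and a real-valued
alternating `l`-form, as a real-valued alternating `(k+l)`-form. -/
noncomputable def wedge {V : Type*} [AddCommGroup V] [Module ℝ V] {k l : ℕ}
    (ω : V [⋀^Fin k]→ₗ[ℝ] ℝ) (η : V [⋀^Fin l]→ₗ[ℝ] ℝ) :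
    V [⋀^Fin (k + l)]→ₗ[ℝ] ℝ :=
  ((TensorProduct.lid ℝ ℝ).toLinearMap.compAlternatingMap
    (ω.domCoprod η)).domDomCongr finSumFinEquiv

section Infrastructure

variable {V : Type*} [AddCommGroup V] [Module ℝ V]

open Equiv TensorProduct

lemma wedge_apply_rfl {k l : ℕ} (a : V [⋀^Fin k]→ₗ[ℝ] ℝ) (b : V [⋀^Fin l]→ₗ[ℝ] ℝ)
    (x : Fin (k + l) → V) :
    wedge a b x = (TensorProduct.lid ℝ ℝ) ((a.domCoprod b) fun i => x (finSumFinEquiv i)) := rfl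

lemma smul_wedge_apply {k l : ℕ} (a : V [⋀^Fin k]→ₗ[ℝ] ℝ) (b : V [⋀^Fin l]→ₗ[ℝ] ℝ)
    (x : Fin (k+l) → V) :
    (k.factorial * l.factorial : ℤ) • (wedge a b x) =
      ∑ σ : Equiv.Perm (Fin k ⊕ Fin l),
        ((Equiv.Perm.sign σ : ℤ) •
          ((a fun i => x (finSumFinEquiv (σ (Sum.inl i)))) *
           (b fun i => x (finSumFinEquiv (σ (Sum.inr i)))))) := by
  have h := MultilinearMap.domCoprod_alternization_eq a b
  have h2 := congrArg (fun (F : MultilinearMap ℝ (fun _ : Fin k ⊕ Fin l => V) (ℝ ⊗[ℝ] ℝ)) =>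
      (TensorProduct.lid ℝ ℝ).toLinearMap (F (fun i => x (finSumFinEquiv i))))
    (congrArg (AlternatingMap.toMultilinearMap) h)
  simp only [MultilinearMap.alternatization_apply, MultilinearMap.domDomCongr_apply,
    MultilinearMap.domCoprod_apply, map_sum, AlternatingMap.coe_multilinearMap,
    Units.smul_def, map_zsmul, lid_tmul, smul_eq_mul,
    AlternatingMap.smul_apply, AlternatingMap.coe_smul] at h2
  rw [show ((((Fintype.card (Fin k)).factorial * (Fintype.card (Fin l)).factorial) • ((a.domCoprod b) : MultilinearMap ℝ (fun _ : Fin k ⊕ Fin l => V) (ℝ ⊗[ℝ] ℝ))) fun i => x (finSumFinEquiv i)) = ((Fintype.card (Fin k)).factorial * (Fintype.card (Fin l)).factorial) • ((a.domCoprod b) fun i => x (finSumFinEquiv i)) from rfl] at h2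
  rw [map_nsmul] at h2
  have hw : (wedge a b) x = (TensorProduct.lid ℝ ℝ).toLinearMap
      ((a.domCoprod b) (fun i => x (finSumFinEquiv i))) := rfl
  simp only [lid_tmul, smul_eq_mul, Fintype.card_fin] at h2
  rw [hw, show ((k.factorial : ℤ) * l.factorial) = ((k.factorial * l.factorial : ℕ) : ℤ) by push_cast; ring, natCast_zsmul]
  exact h2.symm

instance : Unique (Equiv.Perm (Fin 1)) :=
  ⟨⟨1⟩, fun _ => Equiv.ext fun i => Subsingleton.elim _ _⟩

lemma perm4_sum {M : Type*} [AddCommMonoid M] (g : Equiv.Perm (Fin 4) → M) :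
    ∑ σ, g σ = ∑ p : Fin 4, ∑ q : Fin 3, ∑ r : Fin 2,
      g (Equiv.Perm.decomposeFin.symm (p, Equiv.Perm.decomposeFin.symm
          (q, Equiv.Perm.decomposeFin.symm (r, 1)))) := by
  rw [← Equiv.sum_comp Equiv.Perm.decomposeFin.symm g, Fintype.sum_prod_type]
  refine Finset.sum_congr rfl fun p _ => ?_
  rw [← Equiv.sum_comp Equiv.Perm.decomposeFin.symm, Fintype.sum_prod_type]
  refine Finset.sum_congr rfl fun q _ => ?_
  rw [← Equiv.sum_comp Equiv.Perm.decomposeFin.symm, Fintype.sum_prod_type]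
  refine Finset.sum_congr rfl fun r _ => ?_
  exact Fintype.sum_unique _

lemma anti22 (f : V [⋀^Fin 2]→ₗ[ℝ] ℝ) (u v : V) : f ![u, v] = - f ![v, u] := by
  have h := f.map_swap ![v, u] (show (0 : Fin 2) ≠ 1 by decide)
  have e : (![v, u] ∘ Equiv.swap (0:Fin 2) 1) = ![u, v] := by
    funext i; fin_cases i <;> simp
  rw [e] at h
  exact h

lemma wedge22_apply (a b : V [⋀^Fin 2]→ₗ[ℝ] ℝ) (x : Fin 4 → V) :
    wedge a b x =
      a ![x 0, x 1] * b ![x 2, x 3] - a ![x 0, x 2] * b ![x 1, x 3]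
        + a ![x 0, x 3] * b ![x 1, x 2] + a ![x 1, x 2] * b ![x 0, x 3]
        - a ![x 1, x 3] * b ![x 0, x 2] + a ![x 2, x 3] * b ![x 0, x 1] := by
  have h := smul_wedge_apply a b x
  rw [Fintype.sum_equiv (finSumFinEquiv.permCongr)
      (fun σ => ((Equiv.Perm.sign σ : ℤ) •
          ((a fun i => x (finSumFinEquiv (σ (Sum.inl i)))) *
           (b fun i => x (finSumFinEquiv (σ (Sum.inr i)))))))
      (fun τ => ((Equiv.Perm.sign τ : ℤ) •
          (a ![x (τ 0), x (τ 1)] * b ![x (τ 2), x (τ 3)])))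
      (fun σ => by
        rw [Equiv.Perm.sign_permCongr]
        congr 1
        refine congrArg₂ (· * ·) (congrArg _ ?_) (congrArg _ ?_)
        · funext i
          fin_cases i <;>
            simp [Equiv.permCongr_apply,
              show (finSumFinEquiv.symm (0 : Fin (2+2)) : Fin 2 ⊕ Fin 2) = Sum.inl 0 from by decide,
              show (finSumFinEquiv.symm (1 : Fin (2+2)) : Fin 2 ⊕ Fin 2) = Sum.inl 1 from by decide]
        · funext i
          fin_cases i <;>
            simp [Equiv.permCongr_apply,
              show (finSumFinEquiv.symm (2 : Fin (2+2)) : Fin 2 ⊕ Fin 2) = Sum.inr 0 from by decide,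
              show (finSumFinEquiv.symm (3 : Fin (2+2)) : Fin 2 ⊕ Fin 2) = Sum.inr 1 from by decide])] at h
  rw [perm4_sum] at h
  simp only [Fin.sum_univ_four, Fin.sum_univ_three, Fin.sum_univ_two] at h
  simp only [show (Perm.decomposeFin.symm ((0:Fin 4), Perm.decomposeFin.symm ((0:Fin 3), Perm.decomposeFin.symm ((0:Fin 2), 1)))) (0:Fin 4) = (0:Fin 4) from by decide,
    show (Perm.decomposeFin.symm ((0:Fin 4), Perm.decomposeFin.symm ((0:Fin 3), Perm.decomposeFin.symm ((0:Fin 2), 1)))) (1:Fin 4) = (1:Fin 4) from by decide,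
    show (Perm.decomposeFin.symm ((0:Fin 4), Perm.decomposeFin.symm ((0:Fin 3), Perm.decomposeFin.symm ((0:Fin 2), 1)))) (2:Fin 4) = (2:Fin 4) from by decide,
    show (Perm.decomposeFin.symm ((0:Fin 4), Perm.decomposeFin.symm ((0:Fin 3), Perm.decomposeFin.symm ((0:Fin 2), 1)))) (3:Fin 4) = (3:Fin 4) from by decide,
    show Equiv.Perm.sign (Perm.decomposeFin.symm ((0:Fin 4), Perm.decomposeFin.symm ((0:Fin 3), Perm.decomposeFin.symm ((0:Fin 2), 1)))) = (1:ℤˣ) from by decide,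
    show (Perm.decomposeFin.symm ((0:Fin 4), Perm.decomposeFin.symm ((0:Fin 3), Perm.decomposeFin.symm ((1:Fin 2), 1)))) (0:Fin 4) = (0:Fin 4) from by decide,
    show (Perm.decomposeFin.symm ((0:Fin 4), Perm.decomposeFin.symm ((0:Fin 3), Perm.decomposeFin.symm ((1:Fin 2), 1)))) (1:Fin 4) = (1:Fin 4) from by decide,
    show (Perm.decomposeFin.symm ((0:Fin 4), Perm.decomposeFin.symm ((0:Fin 3), Perm.decomposeFin.symm ((1:Fin 2), 1)))) (2:Fin 4) = (3:Fin 4) from by decide,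
    show (Perm.decomposeFin.symm ((0:Fin 4), Perm.decomposeFin.symm ((0:Fin 3), Perm.decomposeFin.symm ((1:Fin 2), 1)))) (3:Fin 4) = (2:Fin 4) from by decide,
    show Equiv.Perm.sign (Perm.decomposeFin.symm ((0:Fin 4), Perm.decomposeFin.symm ((0:Fin 3), Perm.decomposeFin.symm ((1:Fin 2), 1)))) = (-1:ℤˣ) from by decide,
    show (Perm.decomposeFin.symm ((0:Fin 4), Perm.decomposeFin.symm ((1:Fin 3), Perm.decomposeFin.symm ((0:Fin 2), 1)))) (0:Fin 4) = (0:Fin 4) from by decide,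
    show (Perm.decomposeFin.symm ((0:Fin 4), Perm.decomposeFin.symm ((1:Fin 3), Perm.decomposeFin.symm ((0:Fin 2), 1)))) (1:Fin 4) = (2:Fin 4) from by decide,
    show (Perm.decomposeFin.symm ((0:Fin 4), Perm.decomposeFin.symm ((1:Fin 3), Perm.decomposeFin.symm ((0:Fin 2), 1)))) (2:Fin 4) = (1:Fin 4) from by decide,
    show (Perm.decomposeFin.symm ((0:Fin 4), Perm.decomposeFin.symm ((1:Fin 3), Perm.decomposeFin.symm ((0:Fin 2), 1)))) (3:Fin 4) = (3:Fin 4) from by decide,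
    show Equiv.Perm.sign (Perm.decomposeFin.symm ((0:Fin 4), Perm.decomposeFin.symm ((1:Fin 3), Perm.decomposeFin.symm ((0:Fin 2), 1)))) = (-1:ℤˣ) from by decide,
    show (Perm.decomposeFin.symm ((0:Fin 4), Perm.decomposeFin.symm ((1:Fin 3), Perm.decomposeFin.symm ((1:Fin 2), 1)))) (0:Fin 4) = (0:Fin 4) from by decide,
    show (Perm.decomposeFin.symm ((0:Fin 4), Perm.decomposeFin.symm ((1:Fin 3), Perm.decomposeFin.symm ((1:Fin 2), 1)))) (1:Fin 4) = (2:Fin 4) from by decide,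
    show (Perm.decomposeFin.symm ((0:Fin 4), Perm.decomposeFin.symm ((1:Fin 3), Perm.decomposeFin.symm ((1:Fin 2), 1)))) (2:Fin 4) = (3:Fin 4) from by decide,
    show (Perm.decomposeFin.symm ((0:Fin 4), Perm.decomposeFin.symm ((1:Fin 3), Perm.decomposeFin.symm ((1:Fin 2), 1)))) (3:Fin 4) = (1:Fin 4) from by decide,
    show Equiv.Perm.sign (Perm.decomposeFin.symm ((0:Fin 4), Perm.decomposeFin.symm ((1:Fin 3), Perm.decomposeFin.symm ((1:Fin 2), 1)))) = (1:ℤˣ) from by decide,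
    show (Perm.decomposeFin.symm ((0:Fin 4), Perm.decomposeFin.symm ((2:Fin 3), Perm.decomposeFin.symm ((0:Fin 2), 1)))) (0:Fin 4) = (0:Fin 4) from by decide,
    show (Perm.decomposeFin.symm ((0:Fin 4), Perm.decomposeFin.symm ((2:Fin 3), Perm.decomposeFin.symm ((0:Fin 2), 1)))) (1:Fin 4) = (3:Fin 4) from by decide,
    show (Perm.decomposeFin.symm ((0:Fin 4), Perm.decomposeFin.symm ((2:Fin 3), Perm.decomposeFin.symm ((0:Fin 2), 1)))) (2:Fin 4) = (2:Fin 4) from by decide,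
    show (Perm.decomposeFin.symm ((0:Fin 4), Perm.decomposeFin.symm ((2:Fin 3), Perm.decomposeFin.symm ((0:Fin 2), 1)))) (3:Fin 4) = (1:Fin 4) from by decide,
    show Equiv.Perm.sign (Perm.decomposeFin.symm ((0:Fin 4), Perm.decomposeFin.symm ((2:Fin 3), Perm.decomposeFin.symm ((0:Fin 2), 1)))) = (-1:ℤˣ) from by decide,
    show (Perm.decomposeFin.symm ((0:Fin 4), Perm.decomposeFin.symm ((2:Fin 3), Perm.decomposeFin.symm ((1:Fin 2), 1)))) (0:Fin 4) = (0:Fin 4) from by decide,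
    show (Perm.decomposeFin.symm ((0:Fin 4), Perm.decomposeFin.symm ((2:Fin 3), Perm.decomposeFin.symm ((1:Fin 2), 1)))) (1:Fin 4) = (3:Fin 4) from by decide,
    show (Perm.decomposeFin.symm ((0:Fin 4), Perm.decomposeFin.symm ((2:Fin 3), Perm.decomposeFin.symm ((1:Fin 2), 1)))) (2:Fin 4) = (1:Fin 4) from by decide,
    show (Perm.decomposeFin.symm ((0:Fin 4), Perm.decomposeFin.symm ((2:Fin 3), Perm.decomposeFin.symm ((1:Fin 2), 1)))) (3:Fin 4) = (2:Fin 4) from by decide,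
    show Equiv.Perm.sign (Perm.decomposeFin.symm ((0:Fin 4), Perm.decomposeFin.symm ((2:Fin 3), Perm.decomposeFin.symm ((1:Fin 2), 1)))) = (1:ℤˣ) from by decide,
    show (Perm.decomposeFin.symm ((1:Fin 4), Perm.decomposeFin.symm ((0:Fin 3), Perm.decomposeFin.symm ((0:Fin 2), 1)))) (0:Fin 4) = (1:Fin 4) from by decide,
    show (Perm.decomposeFin.symm ((1:Fin 4), Perm.decomposeFin.symm ((0:Fin 3), Perm.decomposeFin.symm ((0:Fin 2), 1)))) (1:Fin 4) = (0:Fin 4) from by decide,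
    show (Perm.decomposeFin.symm ((1:Fin 4), Perm.decomposeFin.symm ((0:Fin 3), Perm.decomposeFin.symm ((0:Fin 2), 1)))) (2:Fin 4) = (2:Fin 4) from by decide,
    show (Perm.decomposeFin.symm ((1:Fin 4), Perm.decomposeFin.symm ((0:Fin 3), Perm.decomposeFin.symm ((0:Fin 2), 1)))) (3:Fin 4) = (3:Fin 4) from by decide,
    show Equiv.Perm.sign (Perm.decomposeFin.symm ((1:Fin 4), Perm.decomposeFin.symm ((0:Fin 3), Perm.decomposeFin.symm ((0:Fin 2), 1)))) = (-1:ℤˣ) from by decide,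
    show (Perm.decomposeFin.symm ((1:Fin 4), Perm.decomposeFin.symm ((0:Fin 3), Perm.decomposeFin.symm ((1:Fin 2), 1)))) (0:Fin 4) = (1:Fin 4) from by decide,
    show (Perm.decomposeFin.symm ((1:Fin 4), Perm.decomposeFin.symm ((0:Fin 3), Perm.decomposeFin.symm ((1:Fin 2), 1)))) (1:Fin 4) = (0:Fin 4) from by decide,
    show (Perm.decomposeFin.symm ((1:Fin 4), Perm.decomposeFin.symm ((0:Fin 3), Perm.decomposeFin.symm ((1:Fin 2), 1)))) (2:Fin 4) = (3:Fin 4) from by decide,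
    show (Perm.decomposeFin.symm ((1:Fin 4), Perm.decomposeFin.symm ((0:Fin 3), Perm.decomposeFin.symm ((1:Fin 2), 1)))) (3:Fin 4) = (2:Fin 4) from by decide,
    show Equiv.Perm.sign (Perm.decomposeFin.symm ((1:Fin 4), Perm.decomposeFin.symm ((0:Fin 3), Perm.decomposeFin.symm ((1:Fin 2), 1)))) = (1:ℤˣ) from by decide,
    show (Perm.decomposeFin.symm ((1:Fin 4), Perm.decomposeFin.symm ((1:Fin 3), Perm.decomposeFin.symm ((0:Fin 2), 1)))) (0:Fin 4) = (1:Fin 4) from by decide,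
    show (Perm.decomposeFin.symm ((1:Fin 4), Perm.decomposeFin.symm ((1:Fin 3), Perm.decomposeFin.symm ((0:Fin 2), 1)))) (1:Fin 4) = (2:Fin 4) from by decide,
    show (Perm.decomposeFin.symm ((1:Fin 4), Perm.decomposeFin.symm ((1:Fin 3), Perm.decomposeFin.symm ((0:Fin 2), 1)))) (2:Fin 4) = (0:Fin 4) from by decide,
    show (Perm.decomposeFin.symm ((1:Fin 4), Perm.decomposeFin.symm ((1:Fin 3), Perm.decomposeFin.symm ((0:Fin 2), 1)))) (3:Fin 4) = (3:Fin 4) from by decide,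
    show Equiv.Perm.sign (Perm.decomposeFin.symm ((1:Fin 4), Perm.decomposeFin.symm ((1:Fin 3), Perm.decomposeFin.symm ((0:Fin 2), 1)))) = (1:ℤˣ) from by decide,
    show (Perm.decomposeFin.symm ((1:Fin 4), Perm.decomposeFin.symm ((1:Fin 3), Perm.decomposeFin.symm ((1:Fin 2), 1)))) (0:Fin 4) = (1:Fin 4) from by decide,
    show (Perm.decomposeFin.symm ((1:Fin 4), Perm.decomposeFin.symm ((1:Fin 3), Perm.decomposeFin.symm ((1:Fin 2), 1)))) (1:Fin 4) = (2:Fin 4) from by decide,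
    show (Perm.decomposeFin.symm ((1:Fin 4), Perm.decomposeFin.symm ((1:Fin 3), Perm.decomposeFin.symm ((1:Fin 2), 1)))) (2:Fin 4) = (3:Fin 4) from by decide,
    show (Perm.decomposeFin.symm ((1:Fin 4), Perm.decomposeFin.symm ((1:Fin 3), Perm.decomposeFin.symm ((1:Fin 2), 1)))) (3:Fin 4) = (0:Fin 4) from by decide,
    show Equiv.Perm.sign (Perm.decomposeFin.symm ((1:Fin 4), Perm.decomposeFin.symm ((1:Fin 3), Perm.decomposeFin.symm ((1:Fin 2), 1)))) = (-1:ℤˣ) from by decide,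
    show (Perm.decomposeFin.symm ((1:Fin 4), Perm.decomposeFin.symm ((2:Fin 3), Perm.decomposeFin.symm ((0:Fin 2), 1)))) (0:Fin 4) = (1:Fin 4) from by decide,
    show (Perm.decomposeFin.symm ((1:Fin 4), Perm.decomposeFin.symm ((2:Fin 3), Perm.decomposeFin.symm ((0:Fin 2), 1)))) (1:Fin 4) = (3:Fin 4) from by decide,
    show (Perm.decomposeFin.symm ((1:Fin 4), Perm.decomposeFin.symm ((2:Fin 3), Perm.decomposeFin.symm ((0:Fin 2), 1)))) (2:Fin 4) = (2:Fin 4) from by decide,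
    show (Perm.decomposeFin.symm ((1:Fin 4), Perm.decomposeFin.symm ((2:Fin 3), Perm.decomposeFin.symm ((0:Fin 2), 1)))) (3:Fin 4) = (0:Fin 4) from by decide,
    show Equiv.Perm.sign (Perm.decomposeFin.symm ((1:Fin 4), Perm.decomposeFin.symm ((2:Fin 3), Perm.decomposeFin.symm ((0:Fin 2), 1)))) = (1:ℤˣ) from by decide,
    show (Perm.decomposeFin.symm ((1:Fin 4), Perm.decomposeFin.symm ((2:Fin 3), Perm.decomposeFin.symm ((1:Fin 2), 1)))) (0:Fin 4) = (1:Fin 4) from by decide,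
    show (Perm.decomposeFin.symm ((1:Fin 4), Perm.decomposeFin.symm ((2:Fin 3), Perm.decomposeFin.symm ((1:Fin 2), 1)))) (1:Fin 4) = (3:Fin 4) from by decide,
    show (Perm.decomposeFin.symm ((1:Fin 4), Perm.decomposeFin.symm ((2:Fin 3), Perm.decomposeFin.symm ((1:Fin 2), 1)))) (2:Fin 4) = (0:Fin 4) from by decide,
    show (Perm.decomposeFin.symm ((1:Fin 4), Perm.decomposeFin.symm ((2:Fin 3), Perm.decomposeFin.symm ((1:Fin 2), 1)))) (3:Fin 4) = (2:Fin 4) from by decide,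
    show Equiv.Perm.sign (Perm.decomposeFin.symm ((1:Fin 4), Perm.decomposeFin.symm ((2:Fin 3), Perm.decomposeFin.symm ((1:Fin 2), 1)))) = (-1:ℤˣ) from by decide,
    show (Perm.decomposeFin.symm ((2:Fin 4), Perm.decomposeFin.symm ((0:Fin 3), Perm.decomposeFin.symm ((0:Fin 2), 1)))) (0:Fin 4) = (2:Fin 4) from by decide,
    show (Perm.decomposeFin.symm ((2:Fin 4), Perm.decomposeFin.symm ((0:Fin 3), Perm.decomposeFin.symm ((0:Fin 2), 1)))) (1:Fin 4) = (1:Fin 4) from by decide,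
    show (Perm.decomposeFin.symm ((2:Fin 4), Perm.decomposeFin.symm ((0:Fin 3), Perm.decomposeFin.symm ((0:Fin 2), 1)))) (2:Fin 4) = (0:Fin 4) from by decide,
    show (Perm.decomposeFin.symm ((2:Fin 4), Perm.decomposeFin.symm ((0:Fin 3), Perm.decomposeFin.symm ((0:Fin 2), 1)))) (3:Fin 4) = (3:Fin 4) from by decide,
    show Equiv.Perm.sign (Perm.decomposeFin.symm ((2:Fin 4), Perm.decomposeFin.symm ((0:Fin 3), Perm.decomposeFin.symm ((0:Fin 2), 1)))) = (-1:ℤˣ) from by decide,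
    show (Perm.decomposeFin.symm ((2:Fin 4), Perm.decomposeFin.symm ((0:Fin 3), Perm.decomposeFin.symm ((1:Fin 2), 1)))) (0:Fin 4) = (2:Fin 4) from by decide,
    show (Perm.decomposeFin.symm ((2:Fin 4), Perm.decomposeFin.symm ((0:Fin 3), Perm.decomposeFin.symm ((1:Fin 2), 1)))) (1:Fin 4) = (1:Fin 4) from by decide,
    show (Perm.decomposeFin.symm ((2:Fin 4), Perm.decomposeFin.symm ((0:Fin 3), Perm.decomposeFin.symm ((1:Fin 2), 1)))) (2:Fin 4) = (3:Fin 4) from by decide,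
    show (Perm.decomposeFin.symm ((2:Fin 4), Perm.decomposeFin.symm ((0:Fin 3), Perm.decomposeFin.symm ((1:Fin 2), 1)))) (3:Fin 4) = (0:Fin 4) from by decide,
    show Equiv.Perm.sign (Perm.decomposeFin.symm ((2:Fin 4), Perm.decomposeFin.symm ((0:Fin 3), Perm.decomposeFin.symm ((1:Fin 2), 1)))) = (1:ℤˣ) from by decide,
    show (Perm.decomposeFin.symm ((2:Fin 4), Perm.decomposeFin.symm ((1:Fin 3), Perm.decomposeFin.symm ((0:Fin 2), 1)))) (0:Fin 4) = (2:Fin 4) from by decide,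
    show (Perm.decomposeFin.symm ((2:Fin 4), Perm.decomposeFin.symm ((1:Fin 3), Perm.decomposeFin.symm ((0:Fin 2), 1)))) (1:Fin 4) = (0:Fin 4) from by decide,
    show (Perm.decomposeFin.symm ((2:Fin 4), Perm.decomposeFin.symm ((1:Fin 3), Perm.decomposeFin.symm ((0:Fin 2), 1)))) (2:Fin 4) = (1:Fin 4) from by decide,
    show (Perm.decomposeFin.symm ((2:Fin 4), Perm.decomposeFin.symm ((1:Fin 3), Perm.decomposeFin.symm ((0:Fin 2), 1)))) (3:Fin 4) = (3:Fin 4) from by decide,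
    show Equiv.Perm.sign (Perm.decomposeFin.symm ((2:Fin 4), Perm.decomposeFin.symm ((1:Fin 3), Perm.decomposeFin.symm ((0:Fin 2), 1)))) = (1:ℤˣ) from by decide,
    show (Perm.decomposeFin.symm ((2:Fin 4), Perm.decomposeFin.symm ((1:Fin 3), Perm.decomposeFin.symm ((1:Fin 2), 1)))) (0:Fin 4) = (2:Fin 4) from by decide,
    show (Perm.decomposeFin.symm ((2:Fin 4), Perm.decomposeFin.symm ((1:Fin 3), Perm.decomposeFin.symm ((1:Fin 2), 1)))) (1:Fin 4) = (0:Fin 4) from by decide,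
    show (Perm.decomposeFin.symm ((2:Fin 4), Perm.decomposeFin.symm ((1:Fin 3), Perm.decomposeFin.symm ((1:Fin 2), 1)))) (2:Fin 4) = (3:Fin 4) from by decide,
    show (Perm.decomposeFin.symm ((2:Fin 4), Perm.decomposeFin.symm ((1:Fin 3), Perm.decomposeFin.symm ((1:Fin 2), 1)))) (3:Fin 4) = (1:Fin 4) from by decide,
    show Equiv.Perm.sign (Perm.decomposeFin.symm ((2:Fin 4), Perm.decomposeFin.symm ((1:Fin 3), Perm.decomposeFin.symm ((1:Fin 2), 1)))) = (-1:ℤˣ) from by decide,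
    show (Perm.decomposeFin.symm ((2:Fin 4), Perm.decomposeFin.symm ((2:Fin 3), Perm.decomposeFin.symm ((0:Fin 2), 1)))) (0:Fin 4) = (2:Fin 4) from by decide,
    show (Perm.decomposeFin.symm ((2:Fin 4), Perm.decomposeFin.symm ((2:Fin 3), Perm.decomposeFin.symm ((0:Fin 2), 1)))) (1:Fin 4) = (3:Fin 4) from by decide,
    show (Perm.decomposeFin.symm ((2:Fin 4), Perm.decomposeFin.symm ((2:Fin 3), Perm.decomposeFin.symm ((0:Fin 2), 1)))) (2:Fin 4) = (0:Fin 4) from by decide,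
    show (Perm.decomposeFin.symm ((2:Fin 4), Perm.decomposeFin.symm ((2:Fin 3), Perm.decomposeFin.symm ((0:Fin 2), 1)))) (3:Fin 4) = (1:Fin 4) from by decide,
    show Equiv.Perm.sign (Perm.decomposeFin.symm ((2:Fin 4), Perm.decomposeFin.symm ((2:Fin 3), Perm.decomposeFin.symm ((0:Fin 2), 1)))) = (1:ℤˣ) from by decide,
    show (Perm.decomposeFin.symm ((2:Fin 4), Perm.decomposeFin.symm ((2:Fin 3), Perm.decomposeFin.symm ((1:Fin 2), 1)))) (0:Fin 4) = (2:Fin 4) from by decide,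
    show (Perm.decomposeFin.symm ((2:Fin 4), Perm.decomposeFin.symm ((2:Fin 3), Perm.decomposeFin.symm ((1:Fin 2), 1)))) (1:Fin 4) = (3:Fin 4) from by decide,
    show (Perm.decomposeFin.symm ((2:Fin 4), Perm.decomposeFin.symm ((2:Fin 3), Perm.decomposeFin.symm ((1:Fin 2), 1)))) (2:Fin 4) = (1:Fin 4) from by decide,
    show (Perm.decomposeFin.symm ((2:Fin 4), Perm.decomposeFin.symm ((2:Fin 3), Perm.decomposeFin.symm ((1:Fin 2), 1)))) (3:Fin 4) = (0:Fin 4) from by decide,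
    show Equiv.Perm.sign (Perm.decomposeFin.symm ((2:Fin 4), Perm.decomposeFin.symm ((2:Fin 3), Perm.decomposeFin.symm ((1:Fin 2), 1)))) = (-1:ℤˣ) from by decide,
    show (Perm.decomposeFin.symm ((3:Fin 4), Perm.decomposeFin.symm ((0:Fin 3), Perm.decomposeFin.symm ((0:Fin 2), 1)))) (0:Fin 4) = (3:Fin 4) from by decide,
    show (Perm.decomposeFin.symm ((3:Fin 4), Perm.decomposeFin.symm ((0:Fin 3), Perm.decomposeFin.symm ((0:Fin 2), 1)))) (1:Fin 4) = (1:Fin 4) from by decide,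
    show (Perm.decomposeFin.symm ((3:Fin 4), Perm.decomposeFin.symm ((0:Fin 3), Perm.decomposeFin.symm ((0:Fin 2), 1)))) (2:Fin 4) = (2:Fin 4) from by decide,
    show (Perm.decomposeFin.symm ((3:Fin 4), Perm.decomposeFin.symm ((0:Fin 3), Perm.decomposeFin.symm ((0:Fin 2), 1)))) (3:Fin 4) = (0:Fin 4) from by decide,
    show Equiv.Perm.sign (Perm.decomposeFin.symm ((3:Fin 4), Perm.decomposeFin.symm ((0:Fin 3), Perm.decomposeFin.symm ((0:Fin 2), 1)))) = (-1:ℤˣ) from by decide,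
    show (Perm.decomposeFin.symm ((3:Fin 4), Perm.decomposeFin.symm ((0:Fin 3), Perm.decomposeFin.symm ((1:Fin 2), 1)))) (0:Fin 4) = (3:Fin 4) from by decide,
    show (Perm.decomposeFin.symm ((3:Fin 4), Perm.decomposeFin.symm ((0:Fin 3), Perm.decomposeFin.symm ((1:Fin 2), 1)))) (1:Fin 4) = (1:Fin 4) from by decide,
    show (Perm.decomposeFin.symm ((3:Fin 4), Perm.decomposeFin.symm ((0:Fin 3), Perm.decomposeFin.symm ((1:Fin 2), 1)))) (2:Fin 4) = (0:Fin 4) from by decide,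
    show (Perm.decomposeFin.symm ((3:Fin 4), Perm.decomposeFin.symm ((0:Fin 3), Perm.decomposeFin.symm ((1:Fin 2), 1)))) (3:Fin 4) = (2:Fin 4) from by decide,
    show Equiv.Perm.sign (Perm.decomposeFin.symm ((3:Fin 4), Perm.decomposeFin.symm ((0:Fin 3), Perm.decomposeFin.symm ((1:Fin 2), 1)))) = (1:ℤˣ) from by decide,
    show (Perm.decomposeFin.symm ((3:Fin 4), Perm.decomposeFin.symm ((1:Fin 3), Perm.decomposeFin.symm ((0:Fin 2), 1)))) (0:Fin 4) = (3:Fin 4) from by decide,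
    show (Perm.decomposeFin.symm ((3:Fin 4), Perm.decomposeFin.symm ((1:Fin 3), Perm.decomposeFin.symm ((0:Fin 2), 1)))) (1:Fin 4) = (2:Fin 4) from by decide,
    show (Perm.decomposeFin.symm ((3:Fin 4), Perm.decomposeFin.symm ((1:Fin 3), Perm.decomposeFin.symm ((0:Fin 2), 1)))) (2:Fin 4) = (1:Fin 4) from by decide,
    show (Perm.decomposeFin.symm ((3:Fin 4), Perm.decomposeFin.symm ((1:Fin 3), Perm.decomposeFin.symm ((0:Fin 2), 1)))) (3:Fin 4) = (0:Fin 4) from by decide,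
    show Equiv.Perm.sign (Perm.decomposeFin.symm ((3:Fin 4), Perm.decomposeFin.symm ((1:Fin 3), Perm.decomposeFin.symm ((0:Fin 2), 1)))) = (1:ℤˣ) from by decide,
    show (Perm.decomposeFin.symm ((3:Fin 4), Perm.decomposeFin.symm ((1:Fin 3), Perm.decomposeFin.symm ((1:Fin 2), 1)))) (0:Fin 4) = (3:Fin 4) from by decide,
    show (Perm.decomposeFin.symm ((3:Fin 4), Perm.decomposeFin.symm ((1:Fin 3), Perm.decomposeFin.symm ((1:Fin 2), 1)))) (1:Fin 4) = (2:Fin 4) from by decide,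
    show (Perm.decomposeFin.symm ((3:Fin 4), Perm.decomposeFin.symm ((1:Fin 3), Perm.decomposeFin.symm ((1:Fin 2), 1)))) (2:Fin 4) = (0:Fin 4) from by decide,
    show (Perm.decomposeFin.symm ((3:Fin 4), Perm.decomposeFin.symm ((1:Fin 3), Perm.decomposeFin.symm ((1:Fin 2), 1)))) (3:Fin 4) = (1:Fin 4) from by decide,
    show Equiv.Perm.sign (Perm.decomposeFin.symm ((3:Fin 4), Perm.decomposeFin.symm ((1:Fin 3), Perm.decomposeFin.symm ((1:Fin 2), 1)))) = (-1:ℤˣ) from by decide,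
    show (Perm.decomposeFin.symm ((3:Fin 4), Perm.decomposeFin.symm ((2:Fin 3), Perm.decomposeFin.symm ((0:Fin 2), 1)))) (0:Fin 4) = (3:Fin 4) from by decide,
    show (Perm.decomposeFin.symm ((3:Fin 4), Perm.decomposeFin.symm ((2:Fin 3), Perm.decomposeFin.symm ((0:Fin 2), 1)))) (1:Fin 4) = (0:Fin 4) from by decide,
    show (Perm.decomposeFin.symm ((3:Fin 4), Perm.decomposeFin.symm ((2:Fin 3), Perm.decomposeFin.symm ((0:Fin 2), 1)))) (2:Fin 4) = (2:Fin 4) from by decide,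
    show (Perm.decomposeFin.symm ((3:Fin 4), Perm.decomposeFin.symm ((2:Fin 3), Perm.decomposeFin.symm ((0:Fin 2), 1)))) (3:Fin 4) = (1:Fin 4) from by decide,
    show Equiv.Perm.sign (Perm.decomposeFin.symm ((3:Fin 4), Perm.decomposeFin.symm ((2:Fin 3), Perm.decomposeFin.symm ((0:Fin 2), 1)))) = (1:ℤˣ) from by decide,
    show (Perm.decomposeFin.symm ((3:Fin 4), Perm.decomposeFin.symm ((2:Fin 3), Perm.decomposeFin.symm ((1:Fin 2), 1)))) (0:Fin 4) = (3:Fin 4) from by decide,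
    show (Perm.decomposeFin.symm ((3:Fin 4), Perm.decomposeFin.symm ((2:Fin 3), Perm.decomposeFin.symm ((1:Fin 2), 1)))) (1:Fin 4) = (0:Fin 4) from by decide,
    show (Perm.decomposeFin.symm ((3:Fin 4), Perm.decomposeFin.symm ((2:Fin 3), Perm.decomposeFin.symm ((1:Fin 2), 1)))) (2:Fin 4) = (1:Fin 4) from by decide,
    show (Perm.decomposeFin.symm ((3:Fin 4), Perm.decomposeFin.symm ((2:Fin 3), Perm.decomposeFin.symm ((1:Fin 2), 1)))) (3:Fin 4) = (2:Fin 4) from by decide,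
    show Equiv.Perm.sign (Perm.decomposeFin.symm ((3:Fin 4), Perm.decomposeFin.symm ((2:Fin 3), Perm.decomposeFin.symm ((1:Fin 2), 1)))) = (-1:ℤˣ) from by decide] at h
  simp only [Units.val_one, Units.val_neg, Int.cast_one, Int.cast_neg, one_smul, neg_smul,
    Int.reduceNeg] at h
  simp only [anti22 a (x 1) (x 0),
    anti22 a (x 2) (x 0),
    anti22 a (x 2) (x 1),
    anti22 a (x 3) (x 0),
    anti22 a (x 3) (x 1),
    anti22 a (x 3) (x 2),
    anti22 b (x 1) (x 0),
    anti22 b (x 2) (x 0),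
    anti22 b (x 2) (x 1),
    anti22 b (x 3) (x 0),
    anti22 b (x 3) (x 1),
    anti22 b (x 3) (x 2)] at h
  have h4 : ((2:ℕ).factorial * (2:ℕ).factorial : ℤ) • (wedge a b x) = (4:ℝ) * wedge a b x := by
    norm_num [zsmul_eq_mul]
  rw [h4] at h
  linarith

lemma wedge_apply_eq_zero {k l : ℕ} (a : V [⋀^Fin k]→ₗ[ℝ] ℝ) (b : V [⋀^Fin l]→ₗ[ℝ] ℝ)
    (v : V)
    (ha : ∀ y : Fin k → V, (∃ j, y j = v) → a y = 0)
    (hb : ∀ y : Fin l → V, (∃ j, y j = v) → b y = 0)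
    (x : Fin (k + l) → V) (j : Fin (k + l)) (hx : x j = v) :
    wedge a b x = 0 := by
  set w : Fin k ⊕ Fin l → V := fun i => x (finSumFinEquiv i) with hw
  have hwv : w (finSumFinEquiv.symm j) = v := by
    rw [hw]; simp [hx]
  have h0 : (a.domCoprod b) w = 0 := by
    rw [AlternatingMap.domCoprod_apply, MultilinearMap.sum_apply]
    refine Finset.sum_eq_zero fun σ _ => ?_
    induction σ using Quotient.inductionOn' with
    | h σ =>
      rw [AlternatingMap.domCoprod.summand_mk'']
      set i0 := finSumFinEquiv.symm j with hi0
      rcases hc : σ.symm i0 with p | p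
      · have : σ (Sum.inl p) = i0 := by rw [← hc]; simp
        have hza : a (fun i => w (σ (Sum.inl i))) = 0 := by
          refine ha _ ⟨p, ?_⟩
          rw [this, hwv]
        simp only [MultilinearMap.smul_apply, MultilinearMap.domDomCongr_apply,
          MultilinearMap.domCoprod_apply, AlternatingMap.coe_multilinearMap]
        rw [hza, TensorProduct.zero_tmul, smul_zero]
      · have : σ (Sum.inr p) = i0 := by rw [← hc]; simp
        have hzb : b (fun i => w (σ (Sum.inr i))) = 0 := by
          refine hb _ ⟨p, ?_⟩
          rw [this, hwv]
        simp only [MultilinearMap.smul_apply, MultilinearMap.domDomCongr_apply,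
          MultilinearMap.domCoprod_apply, AlternatingMap.coe_multilinearMap]
        rw [hzb, TensorProduct.tmul_zero, smul_zero]
  rw [wedge_apply_rfl, h0, LinearEquiv.map_zero]

lemma wedge_smul_left {k l : ℕ} (c : ℝ) (a : V [⋀^Fin k]→ₗ[ℝ] ℝ) (b : V [⋀^Fin l]→ₗ[ℝ] ℝ) :
    wedge (c • a) b = c • wedge a b := by
  have hd : (c • a).domCoprod b = c • a.domCoprod b := by
    rw [← AlternatingMap.domCoprod'_apply, ← AlternatingMap.domCoprod'_apply,
      ← TensorProduct.smul_tmul', map_smul]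
  ext x
  rw [AlternatingMap.smul_apply, wedge_apply_rfl, wedge_apply_rfl, hd]
  rw [AlternatingMap.smul_apply, map_smul]

lemma wedge_zero_left {k l : ℕ} (b : V [⋀^Fin l]→ₗ[ℝ] ℝ) :
    wedge (0 : V [⋀^Fin k]→ₗ[ℝ] ℝ) b = 0 := by
  have : (0 : V [⋀^Fin k]→ₗ[ℝ] ℝ) = (0:ℝ) • 0 := by simp
  rw [this, wedge_smul_left, zero_smul]

lemma wedge_zero_right {k l : ℕ} (a : V [⋀^Fin k]→ₗ[ℝ] ℝ) :
    wedge a (0 : V [⋀^Fin l]→ₗ[ℝ] ℝ) = 0 := by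
  have hd : a.domCoprod (0 : V [⋀^Fin l]→ₗ[ℝ] ℝ) = 0 := by
    rw [← AlternatingMap.domCoprod'_apply, TensorProduct.tmul_zero, map_zero]
  ext x
  rw [wedge_apply_rfl, hd, AlternatingMap.zero_apply, LinearEquiv.map_zero,
    AlternatingMap.zero_apply]

lemma vec2_eta (y : Fin 2 → V) : y = ![y 0, y 1] := by
  funext i; fin_cases i <;> rfl

lemma kill_of (f : V [⋀^Fin 2]→ₗ[ℝ] ℝ) (v : V) (hv : ∀ z, f ![v, z] = 0) :
    ∀ y : Fin 2 → V, (∃ j, y j = v) → f y = 0 := by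
  rintro y ⟨j, hj⟩
  rw [vec2_eta y]
  fin_cases j
  · rw [show y 0 = v from hj]; exact hv (y 1)
  · rw [show y 1 = v from hj, anti22, hv (y 0), neg_zero]

/-- Evaluation of a 2-form with fixed first argument, as a linear map. -/
def evalR (f : V [⋀^Fin 2]→ₗ[ℝ] ℝ) (u : V) : V →ₗ[ℝ] ℝ where
  toFun y := f ![u, y]
  map_add' y z := by
    have h : ∀ t : V, (![u, t] : Fin 2 → V) = Function.update ![u, u] 1 t := by
      intro t; funext i; fin_cases i <;> simp
    show f ![u, y + z] = f ![u, y] + f ![u, z]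
    rw [h (y + z), h y, h z]
    exact f.map_update_add _ _ _ _
  map_smul' c y := by
    have h : ∀ t : V, (![u, t] : Fin 2 → V) = Function.update ![u, u] 1 t := by
      intro t; funext i; fin_cases i <;> simp
    show f ![u, c • y] = c • f ![u, y]
    rw [h (c • y), h y]
    exact f.map_update_smul _ _ _ _

end Infrastructure

set_option maxRecDepth 8000 in
/-- If alternating 2-forms `η₁`, `η₂`, `ω` on a 6-dimensional real vector space satisfy
`η₁ ∧ η₁ = 0`, `η₂ ∧ η₂ = 0` and `ω ∧ ω + q·(η₁ ∧ η₂) = 0`, then `ω ∧ ω ∧ ω = 0`. -/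
theorem omega_cube_eq_zero
    (V : Type*) [AddCommGroup V] [Module ℝ V] [FiniteDimensional ℝ V]
    (hV : Module.finrank ℝ V = 6) (η₁ η₂ ω : V [⋀^Fin 2]→ₗ[ℝ] ℝ) (q : ℝ)
    (h₁ : wedge η₁ η₁ = 0) (h₂ : wedge η₂ η₂ = 0)
    (hω : wedge ω ω + q • wedge η₁ η₂ = 0) :
    wedge (wedge ω ω) ω = 0 := by
  classical
  set E := wedge η₁ η₂ with hE
  have hW : wedge ω ω = (-q) • E := by
    have h' : wedge ω ω = -(q • E) := add_eq_zero_iff_eq_neg.mp hω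
    rw [h']; ext x; simp
  rw [hW, wedge_smul_left]
  rcases eq_or_ne q 0 with hq | hq
  · rw [hq]; simp
  rcases eq_or_ne η₁ 0 with h1z | h1z
  · rw [hE, h1z, wedge_zero_left, wedge_zero_left, smul_zero]
  rcases eq_or_ne η₂ 0 with h2z | h2z
  · rw [hE, h2z, wedge_zero_right, wedge_zero_left, smul_zero]
  -- pick u, w with η₁ ![u, w] ≠ 0
  have hex1 : ∃ u w : V, η₁ ![u, w] ≠ 0 := by
    by_contra hcon
    push_neg at hcon
    exact h1z (AlternatingMap.ext fun y => by
      rw [vec2_eta y, hcon (y 0) (y 1), AlternatingMap.zero_apply])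
  obtain ⟨u, w, hc₁⟩ := hex1
  have hex2 : ∃ s t : V, η₂ ![s, t] ≠ 0 := by
    by_contra hcon
    push_neg at hcon
    exact h2z (AlternatingMap.ext fun y => by
      rw [vec2_eta y, hcon (y 0) (y 1), AlternatingMap.zero_apply])
  obtain ⟨s, t, hc₂⟩ := hex2
  -- decomposability identities
  have decomp : ∀ (f : V [⋀^Fin 2]→ₗ[ℝ] ℝ), wedge f f = 0 → ∀ u w xx yy : V,
      f ![u, w] * f ![xx, yy] = f ![u, xx] * f ![w, yy] - f ![u, yy] * f ![w, xx] := by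
    intro f hf u w xx yy
    have h := wedge22_apply f f ![u, w, xx, yy]
    rw [hf, AlternatingMap.zero_apply] at h
    simp only [show (![u, w, xx, yy] : Fin 4 → V) 0 = u from rfl,
      show (![u, w, xx, yy] : Fin 4 → V) 1 = w from rfl,
      show (![u, w, xx, yy] : Fin 4 → V) 2 = xx from rfl,
      show (![u, w, xx, yy] : Fin 4 → V) 3 = yy from rfl] at h
    linarith [h]
  -- common kernel vector v
  obtain ⟨v, hvker, hv0⟩ : ∃ v : V, v ∈ LinearMap.ker (LinearMap.pi
      (![evalR η₁ u, evalR η₁ w, evalR η₂ s, evalR η₂ t] : Fin 4 → V →ₗ[ℝ] ℝ)) ∧ v ≠ 0 := by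
    set L := LinearMap.pi
      (![evalR η₁ u, evalR η₁ w, evalR η₂ s, evalR η₂ t] : Fin 4 → V →ₗ[ℝ] ℝ)
    have hker : LinearMap.ker L ≠ ⊥ := by
      intro hbot
      have hinj : Function.Injective L := LinearMap.ker_eq_bot.mp hbot
      have hle := LinearMap.finrank_le_finrank_of_injective hinj
      rw [hV] at hle
      simp only [Module.finrank_pi, Fintype.card_fin] at hle
      omega
    obtain ⟨v, hv, hv0⟩ := (Submodule.ne_bot_iff _).mp hker
    exact ⟨v, hv, hv0⟩
  rw [LinearMap.mem_ker] at hvker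
  have hcomp : ∀ i : Fin 4,
      (![evalR η₁ u, evalR η₁ w, evalR η₂ s, evalR η₂ t] : Fin 4 → V →ₗ[ℝ] ℝ) i v = 0 := by
    intro i
    have := congrFun hvker i
    rwa [LinearMap.pi_apply] at this
  have huv : η₁ ![u, v] = 0 := hcomp 0
  have hwv : η₁ ![w, v] = 0 := hcomp 1
  have hsv : η₂ ![s, v] = 0 := hcomp 2
  have htv : η₂ ![t, v] = 0 := hcomp 3
  -- η₁ and η₂ kill v
  have kill1 : ∀ y : Fin 2 → V, (∃ j, y j = v) → η₁ y = 0 := by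
    refine kill_of η₁ v fun z => ?_
    have hd := decomp η₁ h₁ u w v z
    have : η₁ ![u, v] * η₁ ![w, z] - η₁ ![u, z] * η₁ ![w, v] = 0 := by
      rw [huv, hwv]; ring
    have h0 : η₁ ![u, w] * η₁ ![v, z] = 0 := by rw [hd, this]
    exact (mul_eq_zero.mp h0).resolve_left hc₁
  have kill2 : ∀ y : Fin 2 → V, (∃ j, y j = v) → η₂ y = 0 := by
    refine kill_of η₂ v fun z => ?_
    have hd := decomp η₂ h₂ s t v z
    have : η₂ ![s, v] * η₂ ![t, z] - η₂ ![s, z] * η₂ ![t, v] = 0 := by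
      rw [hsv, htv]; ring
    have h0 : η₂ ![s, t] * η₂ ![v, z] = 0 := by rw [hd, this]
    exact (mul_eq_zero.mp h0).resolve_left hc₂
  have killE : ∀ y : Fin 4 → V, (∃ j, y j = v) → E y = 0 := by
    rintro y ⟨j, hj⟩
    exact wedge_apply_eq_zero η₁ η₂ v kill1 kill2 y j hj
  -- the three-term identity for ω
  have star : ∀ xx yy zz : V,
      ω ![v, xx] * ω ![yy, zz] - ω ![v, yy] * ω ![xx, zz] + ω ![v, zz] * ω ![xx, yy] = 0 := by
    intro xx yy zz
    have hWv : wedge ω ω ![v, xx, yy, zz] = 0 := by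
      rw [hW, AlternatingMap.smul_apply, killE ![v, xx, yy, zz] ⟨0, rfl⟩, smul_zero]
    have h := wedge22_apply ω ω ![v, xx, yy, zz]
    rw [hWv] at h
    simp only [show (![v, xx, yy, zz] : Fin 4 → V) 0 = v from rfl,
      show (![v, xx, yy, zz] : Fin 4 → V) 1 = xx from rfl,
      show (![v, xx, yy, zz] : Fin 4 → V) 2 = yy from rfl,
      show (![v, xx, yy, zz] : Fin 4 → V) 3 = zz from rfl] at h
    linarith [h]
  by_cases hlam : ∀ z : V, ω ![v, z] = 0
  · -- ω kills v; show wedge E ω = 0 by evaluating on bases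
    have killω : ∀ y : Fin 2 → V, (∃ j, y j = v) → ω y = 0 := kill_of ω v hlam
    suffices hEω : wedge E ω = 0 by rw [hEω, smul_zero]
    refine AlternatingMap.ext fun x => ?_
    rw [AlternatingMap.zero_apply]
    by_cases hli : LinearIndependent ℝ x
    · have hcard : Fintype.card (Fin 6) = Module.finrank ℝ V := by
        rw [hV, Fintype.card_fin]
      have hsp := hli.span_eq_top_of_card_eq_finrank hcard
      have hvmem : v ∈ Submodule.span ℝ (Set.range x) := by rw [hsp]; trivial
      obtain ⟨c, hc⟩ := (Submodule.mem_span_range_iff_exists_fun ℝ).mp hvmem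
      have hex : ∃ i, c i ≠ 0 := by
        by_contra hall
        push_neg at hall
        apply hv0
        rw [← hc]
        simp [hall]
      obtain ⟨i, hci⟩ := hex
      have h1 : wedge E ω (Function.update x i v) = 0 :=
        wedge_apply_eq_zero E ω v killE killω _ i (Function.update_self i v x)
      rw [← hc, AlternatingMap.map_update_sum] at h1
      have h2 : ∀ j : Fin (2 + 2 + 2), wedge E ω (Function.update x i (c j • x j))
          = if j = i then c i • wedge E ω x else 0 := by
        intro j
        rw [AlternatingMap.map_update_smul]
        by_cases hji : j = i
        · subst hji
          rw [Function.update_eq_self, if_pos rfl]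
        · rw [if_neg hji]
          have hz : wedge E ω (Function.update x i (x j)) = 0 := by
            refine AlternatingMap.map_eq_zero_of_eq _ _ (i := i) (j := j) ?_ fun h => hji h.symm
            rw [Function.update_self, Function.update_of_ne hji]
          rw [hz, smul_zero]
      simp only [h2, Finset.sum_ite_eq', Finset.mem_univ, if_true] at h1
      rcases smul_eq_zero.mp h1 with h | h
      · exact absurd h hci
      · exact h
    · exact (wedge E ω).map_linearDependent x hli
  · push_neg at hlam
    obtain ⟨w', hw'⟩ := hlam
    have hdec : ∀ xx yy : V,
        ω ![v, w'] * ω ![xx, yy] = ω ![v, xx] * ω ![w', yy] - ω ![v, yy] * ω ![w', xx] := by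
      intro xx yy
      linarith [star w' xx yy]
    have hW0 : wedge ω ω = 0 := by
      refine AlternatingMap.ext fun y => ?_
      rw [AlternatingMap.zero_apply, wedge22_apply]
      set c := ω ![v, w'] with hcdef
      have val : ∀ xx yy : V, ω ![xx, yy]
          = (ω ![v, xx] * ω ![w', yy] - ω ![v, yy] * ω ![w', xx]) / c := by
        intro xx yy
        rw [eq_div_iff hw', mul_comm]
        exact hdec xx yy
      rw [val (y 0) (y 1), val (y 2) (y 3), val (y 0) (y 2), val (y 1) (y 3),
        val (y 0) (y 3), val (y 1) (y 2)]
      field_simp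
      ring
    have hE0 : E = 0 := by
      have h0 : (-q) • E = 0 := by rw [← hW, hW0]
      rcases smul_eq_zero.mp h0 with h | h
      · exact absurd h (by simpa using hq)
      · exact h
    rw [hE0, wedge_zero_left, smul_zero]
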